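/- (Closed-form solution of the Y-subproblem, eq. (13)–(14)) Let A be an n1 × n2 × n3 tensor with t-SVD A = U ∗ S ∗ V^H, and let β > 0. Define the f-diagonal tensor D by specifying its mode-3 DFT: D̄(i,i,k) = max(S̄(i,i,k) − n3/β, 0) for all i, k (and zero off the diagonal). Then Y* = U ∗ D ∗ V^H is a global minimizer of the function Y ↦ ‖Y‖_TNN + (β/2)·‖A − Y‖_F² over all n1 × n2 × n3 tensors. -/

import Mathlib

open Matrix
open scoped BigOperators ComplexConjugate

noncomputable section

/-- Circular convolution of two vectors of length `n`, indexed by `ZMod n`. -/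
def cconv {n : ℕ} [NeZero n] (a b : ZMod n → ℂ) : ZMod n → ℂ :=
  fun k => ∑ t : ZMod n, a t * b (k - t)

/-- Unnormalized discrete Fourier transform with ω = exp(-2πi/n):
`dft x k = ∑ t, x t * ω ^ (k*t)`. -/
def dft {n : ℕ} [NeZero n] (x : ZMod n → ℂ) : ZMod n → ℂ :=
  fun k => ∑ t : ZMod n, x t * Complex.exp (-(2 * Real.pi * Complex.I) / n) ^ (k * t).val

/-- A third-order complex tensor of size n1 × n2 × n3 (third index taken modulo n3). -/
abbrev Tensor (n1 n2 n3 : ℕ) := Fin n1 → Fin n2 → ZMod n3 → ℂ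

/-- The t-product: the (i,j)-th mode-3 tube of `A ∗ B` is `∑ k, A(i,k,·) ⋆ B(k,j,·)`. -/
def tProd {n1 n2 n4 n3 : ℕ} [NeZero n3] (A : Tensor n1 n2 n3) (B : Tensor n2 n4 n3) :
    Tensor n1 n4 n3 :=
  fun i j => ∑ k : Fin n2, cconv (A i k) (B k j)

/-- Mode-3 DFT: apply the DFT to every mode-3 tube. -/
def mdft {n1 n2 n3 : ℕ} [NeZero n3] (X : Tensor n1 n2 n3) : Tensor n1 n2 n3 :=
  fun i j => dft (X i j)

/-- The k-th frontal fslice of a tensor, as a matrix. -/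
def fslice {n1 n2 n3 : ℕ} (X : Tensor n1 n2 n3) (k : ZMod n3) : Matrix (Fin n1) (Fin n2) ℂ :=
  Matrix.of fun i j => X i j k

/-- Conjugate transpose of a tensor: conjugate-transpose each frontal fslice and reverse
the order of the transposed slices 2 through n3, i.e. `Xᴴ(i,j,t) = conj (X j i (-t))`. -/
def tconj {n1 n2 n3 : ℕ} (X : Tensor n1 n2 n3) : Tensor n2 n1 n3 :=
  fun i j t => (starRingEnd ℂ) (X j i (-t))

/-- The identity tensor: first frontal fslice is the identity matrix, others are zero. -/
def tId (n n3 : ℕ) : Tensor n n n3 :=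
  fun i j t => if t = 0 ∧ i = j then 1 else 0

/-- A tensor `Q` is orthogonal if `Q ∗ Qᴴ = Qᴴ ∗ Q = I`. -/
def TOrthogonal {n n3 : ℕ} [NeZero n3] (Q : Tensor n n n3) : Prop :=
  tProd Q (tconj Q) = tId n n3 ∧ tProd (tconj Q) Q = tId n n3

/-- A tensor is f-diagonal if each of its frontal slices is a diagonal matrix. -/
def FDiagonal {n1 n2 n3 : ℕ} (S : Tensor n1 n2 n3) : Prop :=
  ∀ (i : Fin n1) (j : Fin n2) (k : ZMod n3), (i : ℕ) ≠ (j : ℕ) → S i j k = 0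

/-- Frobenius norm of a tensor. -/
def frob {n1 n2 n3 : ℕ} [NeZero n3] (X : Tensor n1 n2 n3) : ℝ :=
  Real.sqrt (∑ i : Fin n1, ∑ j : Fin n2, ∑ t : ZMod n3, ‖X i j t‖ ^ 2)

/-- Frobenius norm of a matrix. -/
def frobM {m n : ℕ} (M : Matrix (Fin m) (Fin n) ℂ) : ℝ :=
  Real.sqrt (∑ i : Fin m, ∑ j : Fin n, ‖M i j‖ ^ 2)

/-- Nuclear norm of a matrix: the sum of its singular values,
i.e. of the square roots of the eigenvalues of `Mᴴ * M`. -/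
def nuclearNorm {m n : ℕ} (M : Matrix (Fin m) (Fin n) ℂ) : ℝ :=
  ∑ j : Fin n, Real.sqrt ((Matrix.isHermitian_conjTranspose_mul_self M).eigenvalues j)

/-- The tensor nuclear norm: sum of the nuclear norms of the Fourier-domain frontal slices. -/
def tnn {n1 n2 n3 : ℕ} [NeZero n3] (X : Tensor n1 n2 n3) : ℝ :=
  ∑ k : ZMod n3, nuclearNorm (fslice (mdft X) k)


def zeta (n : ℕ) : ℂ := Complex.exp (-(2 * Real.pi * Complex.I) / n)

lemma zeta_pow_n (n : ℕ) [NeZero n] : zeta n ^ n = 1 := by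
  rw [zeta, ← Complex.exp_nat_mul]
  have hn : (n : ℂ) ≠ 0 := Nat.cast_ne_zero.mpr (NeZero.ne n)
  rw [mul_div_cancel₀ _ hn, Complex.exp_neg, Complex.exp_two_pi_mul_I, inv_one]

lemma zeta_pow_mod (n : ℕ) [NeZero n] (m : ℕ) : zeta n ^ m = zeta n ^ (m % n) :=
  pow_eq_pow_mod m (zeta_pow_n n)

def zm {n : ℕ} [NeZero n] (a : ZMod n) : ℂ := zeta n ^ a.val

lemma zm_add {n : ℕ} [NeZero n] (a b : ZMod n) : zm (a + b) = zm a * zm b := by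
  rw [zm, zm, zm, ← pow_add, ZMod.val_add, ← zeta_pow_mod]

lemma zm_zero {n : ℕ} [NeZero n] : zm (0 : ZMod n) = 1 := by
  simp [zm, ZMod.val_zero]

lemma zm_mul_neg {n : ℕ} [NeZero n] (a : ZMod n) : zm a * zm (-a) = 1 := by
  rw [← zm_add, add_neg_cancel, zm_zero]

lemma conj_zeta_mul (n : ℕ) [NeZero n] : (starRingEnd ℂ) (zeta n) * zeta n = 1 := by
  rw [zeta, ← Complex.exp_conj, ← Complex.exp_add]
  have h : (starRingEnd ℂ) (-(2 * (Real.pi:ℂ) * Complex.I) / (n:ℂ)) +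
      (-(2 * (Real.pi:ℂ) * Complex.I) / (n:ℂ)) = 0 := by
    simp [map_div₀, Complex.conj_I, map_ofNat]
    ring
  rw [h, Complex.exp_zero]

lemma conj_zm {n : ℕ} [NeZero n] (a : ZMod n) : (starRingEnd ℂ) (zm a) = zm (-a) := by
  have h1 : (starRingEnd ℂ) (zm a) * zm a = 1 := by
    rw [zm, map_pow, ← mul_pow, conj_zeta_mul, one_pow]
  exact (eq_inv_of_mul_eq_one_left h1).trans (eq_inv_of_mul_eq_one_right (zm_mul_neg a)).symm

lemma sum_pow_val {n : ℕ} [NeZero n] (w : ℂ) :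
    ∑ k : ZMod n, w ^ (ZMod.val k) = ∑ i ∈ Finset.range n, w ^ i := by
  rw [← Fin.sum_univ_eq_sum_range]
  have hbij : Function.Bijective (fun i : Fin n => ((i : ℕ) : ZMod n)) := by
    rw [Fintype.bijective_iff_injective_and_card]
    constructor
    · intro a b hab
      have h : ZMod.val ((a:ℕ) : ZMod n) = ZMod.val ((b:ℕ) : ZMod n) :=
        congrArg ZMod.val hab
      rwa [ZMod.val_cast_of_lt a.isLt, ZMod.val_cast_of_lt b.isLt, Fin.val_inj] at h
    · simp [ZMod.card]
  exact (Fintype.sum_bijective _ hbij _ _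
    (fun i => by rw [ZMod.val_cast_of_lt i.isLt])).symm

lemma sum_zm_all {n : ℕ} [NeZero n] (a : ZMod n) :
    ∑ k : ZMod n, zm (k * a) = if a = 0 then (n : ℂ) else 0 := by
  split_ifs with ha
  · subst ha; simp [zm_zero, Finset.card_univ, ZMod.card]
  · have hz : ∀ k : ZMod n, zm (k * a) = (zm a) ^ (ZMod.val k) := by
      intro k
      rw [zm, zm, ZMod.val_mul, ← zeta_pow_mod, mul_comm (ZMod.val k), pow_mul]
    simp_rw [hz]
    rw [sum_pow_val]
    have hprim : IsPrimitiveRoot (zeta n) n := by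
      have h0 := Complex.isPrimitiveRoot_exp n (NeZero.ne n)
      have : zeta n = (Complex.exp (2 * Real.pi * Complex.I / n))⁻¹ := by
        rw [zeta, ← Complex.exp_neg, neg_div]
      rw [this]
      exact h0.inv
    have hne1 : zm a ≠ 1 := by
      rw [zm]
      exact hprim.pow_ne_one_of_pos_of_lt (ZMod.val_pos.mpr ha).ne' a.val_lt
    have hwn : (zm a) ^ n = 1 := by
      rw [zm, ← pow_mul, mul_comm, pow_mul, zeta_pow_n, one_pow]
    rw [geom_sum_eq hne1, hwn, sub_self, zero_div]

lemma dft_eq' {n : ℕ} [NeZero n] (x : ZMod n → ℂ) (k : ZMod n) :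
    dft x k = ∑ t : ZMod n, x t * zm (k * t) := rfl

lemma dft_cconv {n : ℕ} [NeZero n] (a b : ZMod n → ℂ) (k : ZMod n) :
    dft (cconv a b) k = dft a k * dft b k := by
  rw [dft_eq', dft_eq', dft_eq', Finset.sum_mul_sum]
  simp only [cconv, Finset.sum_mul]
  rw [Finset.sum_comm]
  apply Finset.sum_congr rfl
  intro s _
  rw [← Equiv.sum_comp (Equiv.addLeft s) (fun t => a s * b (t - s) * zm (k * t))]
  apply Finset.sum_congr rfl
  intro u _
  simp only [Equiv.coe_addLeft]
  have h1 : s + u - s = u := by ring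
  have h2 : k * (s + u) = k * s + k * u := by ring
  rw [h1, h2, zm_add]
  ring

lemma dft_conjneg {n : ℕ} [NeZero n] (x : ZMod n → ℂ) (k : ZMod n) :
    dft (fun t => (starRingEnd ℂ) (x (-t))) k = (starRingEnd ℂ) (dft x k) := by
  rw [dft_eq', dft_eq', map_sum]
  rw [← Equiv.sum_comp (Equiv.neg (ZMod n)) (fun t => (starRingEnd ℂ) (x (-t)) * zm (k * t))]
  apply Finset.sum_congr rfl
  intro t _
  simp only [Equiv.neg_apply, neg_neg]
  rw [_root_.map_mul, conj_zm]
  congr 2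
  ring

lemma dft_sub {n : ℕ} [NeZero n] (x y : ZMod n → ℂ) (k : ZMod n) :
    dft (x - y) k = dft x k - dft y k := by
  simp only [dft, Pi.sub_apply, sub_mul, Finset.sum_sub_distrib]

lemma dft_zero {n : ℕ} [NeZero n] (k : ZMod n) : dft (0 : ZMod n → ℂ) k = 0 := by
  simp [dft]

lemma sum_normSq_dft {n : ℕ} [NeZero n] (x : ZMod n → ℂ) :
    ∑ k : ZMod n, Complex.normSq (dft x k) = n * ∑ t : ZMod n, Complex.normSq (x t) := by
  have key : ∑ k : ZMod n, (starRingEnd ℂ) (dft x k) * dft x k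
      = (n : ℂ) * ∑ t : ZMod n, (starRingEnd ℂ) (x t) * x t := by
    have step1 : ∀ k : ZMod n, (starRingEnd ℂ) (dft x k) * dft x k
        = ∑ s : ZMod n, ∑ t : ZMod n,
            (starRingEnd ℂ) (x s) * x t * zm (k * (t - s)) := by
      intro k
      rw [dft_eq', map_sum, Finset.sum_mul_sum]
      apply Finset.sum_congr rfl; intro s _
      apply Finset.sum_congr rfl; intro t _
      rw [_root_.map_mul, conj_zm]
      have : k * (t - s) = k * t + -(k * s) := by ring
      rw [this, zm_add]
      ring
    calc ∑ k : ZMod n, (starRingEnd ℂ) (dft x k) * dft x k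
        = ∑ k : ZMod n, ∑ s : ZMod n, ∑ t : ZMod n,
            (starRingEnd ℂ) (x s) * x t * zm (k * (t - s)) := by
          exact Finset.sum_congr rfl fun k _ => step1 k
      _ = ∑ s : ZMod n, ∑ t : ZMod n, (starRingEnd ℂ) (x s) * x t *
            (∑ k : ZMod n, zm (k * (t - s))) := by
          rw [Finset.sum_comm]
          apply Finset.sum_congr rfl; intro s _
          rw [Finset.sum_comm]
          apply Finset.sum_congr rfl; intro t _
          rw [Finset.mul_sum]
      _ = (n : ℂ) * ∑ t : ZMod n, (starRingEnd ℂ) (x t) * x t := by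
          rw [Finset.mul_sum]
          apply Finset.sum_congr rfl; intro s _
          rw [Finset.sum_eq_single s]
          · rw [sum_zm_all, if_pos (by ring), mul_comm]
          · intro t _ hts
            rw [sum_zm_all, if_neg (fun h => hts (by
              have := sub_eq_zero.mp h; exact this)), mul_zero]
          · intro h; exact absurd (Finset.mem_univ s) h
  have := congrArg Complex.re key
  simpa [Complex.normSq_apply, Complex.normSq_eq_conj_mul_self, Complex.ofReal_sum, Finset.mul_sum] using this


section MatrixLemmas
open scoped ComplexOrder
open scoped MatrixOrder

lemma frobM_sq {m n : ℕ} (M : Matrix (Fin m) (Fin n) ℂ) :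
    frobM M ^ 2 = ∑ i : Fin m, ∑ j : Fin n, Complex.normSq (M i j) := by
  rw [frobM, Real.sq_sqrt]
  · simp_rw [Complex.sq_norm]
  · positivity

lemma sum_eq_dite {M : Type*} [AddCommMonoid M] {m : ℕ} (p : ℕ) (f : Fin m → M)
    (hf : ∀ i : Fin m, (i:ℕ) ≠ p → f i = 0) :
    ∑ i, f i = if h : p < m then f ⟨p, h⟩ else 0 := by
  split_ifs with h
  · exact Finset.sum_eq_single_of_mem ⟨p,h⟩ (Finset.mem_univ _)
      (fun i _ hi => hf i (fun hc => hi (Fin.ext hc)))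
  · exact Finset.sum_eq_zero fun i _ => hf i (fun hc => h (hc ▸ i.isLt))

lemma fdiag_conjT_mul {m n : ℕ} (X Y : Matrix (Fin m) (Fin n) ℂ)
    (hX : ∀ (i : Fin m) (j : Fin n), (i:ℕ) ≠ (j:ℕ) → X i j = 0)
    (hY : ∀ (i : Fin m) (j : Fin n), (i:ℕ) ≠ (j:ℕ) → Y i j = 0) :
    Xᴴ * Y = Matrix.diagonal (fun j : Fin n =>
      if h : (j:ℕ) < m then star (X ⟨(j:ℕ),h⟩ j) * Y ⟨(j:ℕ),h⟩ j else 0) := by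
  ext j j'
  rw [Matrix.mul_apply]
  simp only [Matrix.conjTranspose_apply]
  by_cases hjj : j = j'
  · subst hjj
    rw [Matrix.diagonal_apply_eq]
    exact sum_eq_dite (j:ℕ) _ (fun i hi => by rw [hX i j hi, star_zero, zero_mul])
  · rw [Matrix.diagonal_apply_ne _ hjj]
    apply Finset.sum_eq_zero
    intro i _
    by_cases hij : (i:ℕ) = (j:ℕ)
    · rw [hY i j' (fun hc => hjj (Fin.ext (hij.symm.trans hc)))]
      rw [mul_zero]
    · rw [hX i j hij, star_zero, zero_mul]

lemma trace_conj_unitary {n : ℕ} (V D : Matrix (Fin n) (Fin n) ℂ) (hV : Vᴴ * V = 1) :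
    Matrix.trace (V * D * Vᴴ) = Matrix.trace D := by
  rw [Matrix.trace_mul_cycle, hV, Matrix.one_mul]

lemma nuclearNorm_coe {m n : ℕ} (M : Matrix (Fin m) (Fin n) ℂ) :
    (nuclearNorm M : ℂ) = Matrix.trace (CFC.sqrt (Mᴴ * M)) := by
  have hA := Matrix.posSemidef_conjTranspose_mul_self M
  rw [CFC.sqrt_eq_cfc, cfc_nnreal_eq_real _ (Mᴴ * M) hA.nonneg, hA.1.cfc_eq]
  rw [Matrix.IsHermitian.cfc, Unitary.conjStarAlgAut_apply, Matrix.trace_mul_cycle,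
    Unitary.coe_star_mul_self, Matrix.one_mul, Matrix.trace_diagonal, nuclearNorm,
    Complex.ofReal_sum]
  refine Finset.sum_congr rfl fun j _ => ?_
  simp [Real.coe_sqrt, Real.coe_toNNReal', max_eq_left (hA.eigenvalues_nonneg j)]

lemma psd_entry_re_nonneg {n : ℕ} {A : Matrix (Fin n) (Fin n) ℂ}
    (hA : A.PosSemidef) (j : Fin n) : 0 ≤ (A j j).re := by
  exact (Complex.nonneg_iff.mp (hA.diag_nonneg (i := j))).1

lemma nuclearNorm_eq_of_sq {m n : ℕ} (M : Matrix (Fin m) (Fin n) ℂ)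
    (dfun : Fin n → ℝ) (hd : ∀ j, 0 ≤ dfun j)
    (V : Matrix (Fin n) (Fin n) ℂ) (hV1 : Vᴴ * V = 1)
    (hsq : Mᴴ * M = (V * Matrix.diagonal (fun j => (dfun j : ℂ)) * Vᴴ) ^ 2) :
    nuclearNorm M = ∑ j, dfun j := by
  set P := V * Matrix.diagonal (fun j => (dfun j : ℂ)) * Vᴴ with hP
  have hPsd : Matrix.PosSemidef P := by
    apply Matrix.PosSemidef.mul_mul_conjTranspose_same
    exact Matrix.posSemidef_diagonal_iff.mpr fun j => Complex.zero_le_real.mpr (hd j)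
  have heq : P = CFC.sqrt (Mᴴ * M) :=
    (CFC.sqrt_unique (by rw [hsq, sq]) hPsd.nonneg).symm
  have : (nuclearNorm M : ℂ) = (↑(∑ j, dfun j) : ℂ) := by
    rw [nuclearNorm_coe, ← heq, hP, trace_conj_unitary _ _ hV1, Matrix.trace_diagonal]
    push_cast
    rfl
  exact_mod_cast this

lemma cs_aux {m : ℕ} (a b : Fin m → ℂ) :
    ∑ i, ‖a i‖ * ‖b i‖ ≤
      Real.sqrt (∑ i, ‖a i‖ ^ 2) * Real.sqrt (∑ i, ‖b i‖ ^ 2) := by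
  have h := Finset.sum_mul_sq_le_sq_mul_sq Finset.univ (fun i => ‖a i‖)
    (fun i => ‖b i‖)
  have hnn : (0:ℝ) ≤ ∑ i, ‖a i‖ * ‖b i‖ := by positivity
  have h2' : ∑ i, ‖a i‖ * ‖b i‖
      ≤ Real.sqrt ((∑ i, ‖a i‖ ^ 2) * ∑ i, ‖b i‖ ^ 2) := by
    rw [show ∑ i, ‖a i‖ * ‖b i‖
        = Real.sqrt ((∑ i, ‖a i‖ * ‖b i‖) ^ 2) from
        (Real.sqrt_sq hnn).symm]
    exact Real.sqrt_le_sqrt h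
  refine h2'.trans ?_
  rw [Real.sqrt_mul (by positivity : (0:ℝ) ≤ ∑ i, ‖a i‖ ^ 2)]

lemma cs_re {m : ℕ} (a b : Fin m → ℂ) :
    (∑ i, star (a i) * b i).re ≤
      Real.sqrt (∑ i, Complex.normSq (a i)) * Real.sqrt (∑ i, Complex.normSq (b i)) := by
  have h1 : (∑ i, star (a i) * b i).re ≤ ‖∑ i, star (a i) * b i‖ :=
    Complex.re_le_norm _
  have h2 : ‖∑ i, star (a i) * b i‖ ≤ ∑ i, ‖a i‖ * ‖b i‖ := by
    refine (norm_sum_le _ _).trans_eq ?_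
    apply Finset.sum_congr rfl
    intro i _
    rw [norm_mul, show star (a i) = (starRingEnd ℂ) (a i) from rfl, Complex.norm_conj]
  simp_rw [← Complex.sq_norm]
  exact (h1.trans h2).trans (cs_aux a b)

lemma re_star_mul_self (z : ℂ) : (star z * z).re = Complex.normSq z := by
  simp [Complex.mul_re, Complex.normSq_apply]

lemma re_trace_le_nuclearNorm {m n : ℕ} (G M : Matrix (Fin m) (Fin n) ℂ)
    (hG : ((1 : Matrix (Fin n) (Fin n) ℂ) - Gᴴ * G).PosSemidef) :
    (Matrix.trace (Gᴴ * M)).re ≤ nuclearNorm M := by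
  have hH : (Mᴴ * M).IsHermitian := Matrix.isHermitian_conjTranspose_mul_self M
  set W : Matrix (Fin n) (Fin n) ℂ := (hH.eigenvectorUnitary : Matrix (Fin n) (Fin n) ℂ)
    with hWdef
  have hW1 : Wᴴ * W = 1 := by
    rw [← Matrix.star_eq_conjTranspose]
    exact Matrix.mem_unitaryGroup_iff'.mp (SetLike.coe_mem _)
  have hW2 : W * Wᴴ = 1 := by
    rw [← Matrix.star_eq_conjTranspose]
    exact Matrix.mem_unitaryGroup_iff.mp (SetLike.coe_mem _)
  have htr : Matrix.trace (Gᴴ * M) = Matrix.trace ((G * W)ᴴ * (M * W)) := by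
    rw [Matrix.conjTranspose_mul,
      show Wᴴ * Gᴴ * (M * W) = Wᴴ * (Gᴴ * M) * W by simp [Matrix.mul_assoc],
      Matrix.trace_mul_cycle, ← Matrix.mul_assoc, hW2, Matrix.one_mul]
  have hentry : ∀ (P Q : Matrix (Fin m) (Fin n) ℂ) (j : Fin n),
      ((Pᴴ * Q) j j) = ∑ i, star (P i j) * (Q i j) := by
    intro P Q j
    simp [Matrix.mul_apply, Matrix.conjTranspose_apply]
  have hnormentry : ∀ (P : Matrix (Fin m) (Fin n) ℂ) (j : Fin n),
      ((Pᴴ * P) j j).re = ∑ i, Complex.normSq (P i j) := by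
    intro P j
    rw [hentry, Complex.re_sum]
    exact Finset.sum_congr rfl fun i _ => re_star_mul_self _
  have hb1 : ∀ j : Fin n, ∑ i, Complex.normSq ((G*W) i j) ≤ 1 := by
    intro j
    have hQ := hG.mul_mul_conjTranspose_same Wᴴ
    rw [Matrix.conjTranspose_conjTranspose] at hQ
    have hQ' : Wᴴ * ((1 : Matrix (Fin n) (Fin n) ℂ) - Gᴴ*G) * W
        = 1 - (G*W)ᴴ*(G*W) := by
      rw [Matrix.mul_sub, Matrix.sub_mul, Matrix.mul_one, hW1, Matrix.conjTranspose_mul]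
      congr 1
      simp [Matrix.mul_assoc]
    rw [hQ'] at hQ
    have h0 := psd_entry_re_nonneg hQ j
    rw [Matrix.sub_apply, Matrix.one_apply_eq, Complex.sub_re, Complex.one_re,
      hnormentry (G*W) j] at h0
    linarith
  have hb2 : ∀ j : Fin n, ∑ i, Complex.normSq ((M*W) i j) = hH.eigenvalues j := by
    intro j
    have hdiag : (M*W)ᴴ*(M*W) = Matrix.diagonal (RCLike.ofReal ∘ hH.eigenvalues) := by
      rw [Matrix.conjTranspose_mul,
        show Wᴴ * Mᴴ * (M*W) = Wᴴ * (Mᴴ*M) * W by simp [Matrix.mul_assoc], hWdef,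
        ← Matrix.star_eq_conjTranspose]
      have h := hH.conjStarAlgAut_star_eigenvectorUnitary
      simpa using h
    have h := hnormentry (M*W) j
    rw [hdiag, Matrix.diagonal_apply_eq] at h
    simpa using h.symm
  rw [htr, Matrix.trace]
  rw [Complex.re_sum]
  have hle : ∀ j : Fin n, (((G*W)ᴴ*(M*W)).diag j).re ≤ Real.sqrt (hH.eigenvalues j) := by
    intro j
    rw [Matrix.diag_apply, hentry]
    refine (cs_re _ _).trans ?_
    have h1 : Real.sqrt (∑ i, Complex.normSq ((G*W) i j)) ≤ 1 :=
      Real.sqrt_le_one.mpr (hb1 j)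
    have h2 : Real.sqrt (∑ i, Complex.normSq ((M*W) i j)) = Real.sqrt (hH.eigenvalues j) := by
      rw [hb2 j]
    rw [h2]
    calc Real.sqrt (∑ i, Complex.normSq ((G*W) i j)) * Real.sqrt (hH.eigenvalues j)
        ≤ 1 * Real.sqrt (hH.eigenvalues j) :=
          mul_le_mul_of_nonneg_right h1 (Real.sqrt_nonneg _)
      _ = Real.sqrt (hH.eigenvalues j) := one_mul _
  exact Finset.sum_le_sum fun j _ => hle j

lemma diag_re {m n : ℕ} (P : Matrix (Fin m) (Fin n) ℂ) (j : Fin n) :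
    ((Pᴴ * P) j j).re = ∑ i, Complex.normSq (P i j) := by
  have h : (Pᴴ * P) j j = ∑ i, star (P i j) * (P i j) := by
    simp [Matrix.mul_apply, Matrix.conjTranspose_apply]
  rw [h, Complex.re_sum]
  exact Finset.sum_congr rfl fun i _ => re_star_mul_self _

lemma matrix_svt {m n : ℕ} {τ : ℝ} (hτ : 0 < τ)
    (U : Matrix (Fin m) (Fin m) ℂ) (hU1 : Uᴴ * U = 1)
    (V : Matrix (Fin n) (Fin n) ℂ) (hV1 : Vᴴ * V = 1) (hV2 : V * Vᴴ = 1)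
    (Sm Dm : Matrix (Fin m) (Fin n) ℂ)
    (hSd : ∀ (i : Fin m) (j : Fin n), (i:ℕ) ≠ (j:ℕ) → Sm i j = 0)
    (hSr : ∀ (i : Fin m) (j : Fin n), (i:ℕ) = (j:ℕ) → 0 ≤ (Sm i j).re ∧ (Sm i j).im = 0)
    (hDm : ∀ (i : Fin m) (j : Fin n), Dm i j =
      if (i:ℕ) = (j:ℕ) then ((max ((Sm i j).re - τ) 0 : ℝ) : ℂ) else 0)
    (M : Matrix (Fin m) (Fin n) ℂ) :
    nuclearNorm (U * Dm * Vᴴ) + 1/(2*τ) * frobM (U * Sm * Vᴴ - U * Dm * Vᴴ)^2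
      ≤ nuclearNorm M + 1/(2*τ) * frobM (U * Sm * Vᴴ - M)^2 := by
  have hτc : ((τ:ℝ) : ℂ) ≠ 0 := Complex.ofReal_ne_zero.mpr (ne_of_gt hτ)
  have hDd : ∀ (i : Fin m) (j : Fin n), (i:ℕ) ≠ (j:ℕ) → Dm i j = 0 := fun i j h => by
    rw [hDm i j, if_neg h]
  set E := Sm - Dm with hE
  have hEd : ∀ (i : Fin m) (j : Fin n), (i:ℕ) ≠ (j:ℕ) → E i j = 0 := by
    intro i j h
    rw [hE, Matrix.sub_apply, hSd i j h, hDd i j h, sub_zero]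
  set dfun : Fin n → ℝ :=
    fun j => if h : (j:ℕ) < m then max ((Sm ⟨(j:ℕ),h⟩ j).re - τ) 0 else 0 with hdfun
  have hdnn : ∀ j, 0 ≤ dfun j := by
    intro j; rw [hdfun]; dsimp only
    split_ifs
    · exact le_max_right _ _
    · exact le_refl 0
  have hSreal : ∀ (i : Fin m) (j : Fin n), (i:ℕ) = (j:ℕ) → Sm i j = ((Sm i j).re : ℂ) := by
    intro i j hij
    exact Complex.ext rfl (by simp [(hSr i j hij).2])
  have hDentry : ∀ (j : Fin n) (h : (j:ℕ) < m), Dm ⟨(j:ℕ),h⟩ j = ((dfun j : ℝ) : ℂ) := by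
    intro j h
    rw [hDm, if_pos rfl, hdfun]; dsimp only; rw [dif_pos h]
  have hEentry : ∀ (j : Fin n) (h : (j:ℕ) < m),
      E ⟨(j:ℕ),h⟩ j = (((Sm ⟨(j:ℕ),h⟩ j).re - dfun j : ℝ) : ℂ) := by
    intro j h
    rw [hE, Matrix.sub_apply, hDentry j h, Complex.ofReal_sub]
    congr 1
    exact hSreal _ _ rfl
  set efun : Fin n → ℝ :=
    fun j => if h : (j:ℕ) < m then ((Sm ⟨(j:ℕ),h⟩ j).re - dfun j)^2 else 0 with hefun
  have hEE : Eᴴ * E = Matrix.diagonal (fun j => ((efun j : ℝ) : ℂ)) := by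
    rw [fdiag_conjT_mul E E hEd hEd]
    refine congrArg Matrix.diagonal (funext fun j => ?_)
    rw [hefun]; dsimp only
    by_cases h : (j:ℕ) < m
    · rw [dif_pos h, dif_pos h, hEentry j h]
      rw [show star ((((Sm ⟨(j:ℕ),h⟩ j).re - dfun j : ℝ)) : ℂ)
          = (((Sm ⟨(j:ℕ),h⟩ j).re - dfun j : ℝ) : ℂ) from Complex.conj_ofReal _]
      push_cast; ring
    · rw [dif_neg h, dif_neg h]; simp
  have harith : ∀ s : ℝ, 0 ≤ s →
      (s - max (s - τ) 0) * max (s - τ) 0 = τ * max (s - τ) 0 := by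
    intro s hs
    rcases le_or_gt s τ with h | h
    · rw [max_eq_right (by linarith)]; ring
    · rw [max_eq_left (by linarith)]; ring
  have hED : Eᴴ * Dm = Matrix.diagonal (fun j => ((τ * dfun j : ℝ) : ℂ)) := by
    rw [fdiag_conjT_mul E Dm hEd hDd]
    refine congrArg Matrix.diagonal (funext fun j => ?_)
    by_cases h : (j:ℕ) < m
    · rw [dif_pos h, hEentry j h, hDentry j h,
        show star ((((Sm ⟨(j:ℕ),h⟩ j).re - dfun j : ℝ)) : ℂ)
          = (((Sm ⟨(j:ℕ),h⟩ j).re - dfun j : ℝ) : ℂ) from Complex.conj_ofReal _]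
      rw [← Complex.ofReal_mul]
      congr 1
      have hd : dfun j = max ((Sm ⟨(j:ℕ),h⟩ j).re - τ) 0 := by
        rw [hdfun]; dsimp only; rw [dif_pos h]
      rw [hd]
      exact harith _ (hSr _ _ rfl).1
    · rw [dif_neg h]
      have : dfun j = 0 := by rw [hdfun]; dsimp only; rw [dif_neg h]
      rw [this]; simp
  have hDD : Dmᴴ * Dm = Matrix.diagonal (fun j => ((dfun j ^ 2 : ℝ) : ℂ)) := by
    rw [fdiag_conjT_mul Dm Dm hDd hDd]
    refine congrArg Matrix.diagonal (funext fun j => ?_)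
    by_cases h : (j:ℕ) < m
    · rw [dif_pos h, hDentry j h,
        show star (((dfun j : ℝ)) : ℂ) = ((dfun j : ℝ) : ℂ) from Complex.conj_ofReal _]
      push_cast; ring
    · have : dfun j = 0 := by rw [hdfun]; dsimp only; rw [dif_neg h]
      rw [dif_neg h, this]; simp
  have hEbound : ∀ j, efun j ≤ τ^2 := by
    intro j
    rw [hefun]; dsimp only
    by_cases h : (j:ℕ) < m
    · rw [dif_pos h]
      have hs := (hSr ⟨(j:ℕ),h⟩ j rfl).1
      have hd : dfun j = max ((Sm ⟨(j:ℕ),h⟩ j).re - τ) 0 := by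
        rw [hdfun]; dsimp only; rw [dif_pos h]
      set s := (Sm ⟨(j:ℕ),h⟩ j).re
      have h1 : 0 ≤ s - dfun j := by
        rw [hd]; rcases le_or_gt s τ with hc | hc
        · rw [max_eq_right (by linarith)]; linarith
        · rw [max_eq_left (by linarith)]; linarith
      have h2 : s - dfun j ≤ τ := by
        rw [hd]; rcases le_or_gt s τ with hc | hc
        · rw [max_eq_right (by linarith)]; linarith
        · rw [max_eq_left (by linarith)]; linarith
      nlinarith [h1, h2]
    · rw [dif_neg h]; positivity
  -- main objects
  set B := U * Sm * Vᴴ with hB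
  set Y := U * Dm * Vᴴ with hY
  have hBY : B - Y = U * E * Vᴴ := by
    rw [hB, hY, hE, Matrix.mul_sub, Matrix.sub_mul]
  set G := ((τ:ℂ))⁻¹ • (U * E * Vᴴ) with hG
  have hBYG : B - Y = ((τ:ℝ):ℂ) • G := by
    rw [hG, smul_smul, mul_inv_cancel₀ hτc, one_smul, hBY]
  have hGH : Gᴴ = ((τ:ℂ))⁻¹ • (V * Eᴴ * Uᴴ) := by
    rw [hG, Matrix.conjTranspose_smul]
    congr 1
    · rw [star_inv₀, Complex.star_def, Complex.conj_ofReal]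
    · rw [Matrix.conjTranspose_mul, Matrix.conjTranspose_mul,
        Matrix.conjTranspose_conjTranspose, Matrix.mul_assoc]
  have hmid : ∀ (X Z : Matrix (Fin m) (Fin n) ℂ),
      (V * Xᴴ * Uᴴ) * (U * Z * Vᴴ) = V * (Xᴴ * Z) * Vᴴ := by
    intro X Z
    simp only [Matrix.mul_assoc]
    rw [← Matrix.mul_assoc Uᴴ U, hU1, Matrix.one_mul]
  set P := V * Matrix.diagonal (fun j => ((dfun j : ℝ) : ℂ)) * Vᴴ with hP
  have hGY : Gᴴ * Y = P := by
    rw [hGH, hY, Matrix.smul_mul, hmid E Dm, hED, hP]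
    have hdg : Matrix.diagonal (fun j => ((τ * dfun j : ℝ) : ℂ))
        = ((τ:ℝ):ℂ) • Matrix.diagonal (fun j => ((dfun j : ℝ) : ℂ)) := by
      ext a b
      rw [Matrix.smul_apply]
      by_cases hab : a = b
      · subst hab
        rw [Matrix.diagonal_apply_eq, Matrix.diagonal_apply_eq, smul_eq_mul]
        push_cast; ring
      · rw [Matrix.diagonal_apply_ne _ hab, Matrix.diagonal_apply_ne _ hab, smul_zero]
    rw [hdg, Matrix.mul_smul, Matrix.smul_mul, smul_smul, inv_mul_cancel₀ hτc, one_smul]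
  have hYH : Yᴴ = V * Dmᴴ * Uᴴ := by
    rw [hY, Matrix.conjTranspose_mul, Matrix.conjTranspose_mul,
      Matrix.conjTranspose_conjTranspose, Matrix.mul_assoc]
  have hYY : Yᴴ * Y = P ^ 2 := by
    rw [hYH, hY, hmid Dm Dm, hDD, hP, pow_two]
    rw [show V * Matrix.diagonal (fun j => ((dfun j:ℝ):ℂ)) * Vᴴ *
        (V * Matrix.diagonal (fun j => ((dfun j:ℝ):ℂ)) * Vᴴ)
        = V * (Matrix.diagonal (fun j => ((dfun j:ℝ):ℂ)) * (Vᴴ * V) *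
            Matrix.diagonal (fun j => ((dfun j:ℝ):ℂ))) * Vᴴ by
      simp only [Matrix.mul_assoc]]
    rw [hV1, Matrix.mul_one, Matrix.diagonal_mul_diagonal]
    rw [show (fun j => ((dfun j : ℝ):ℂ) * ((dfun j : ℝ):ℂ))
        = fun j => ((dfun j ^ 2 : ℝ):ℂ) from funext fun j => by push_cast; ring]
  have hNY : nuclearNorm Y = ∑ j, dfun j := nuclearNorm_eq_of_sq Y dfun hdnn V hV1 hYY
  have hGYre : (Matrix.trace (Gᴴ * Y)).re = ∑ j, dfun j := by
    rw [hGY, hP, trace_conj_unitary _ _ hV1, Matrix.trace_diagonal, Complex.re_sum]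
    simp
  have hGG : Gᴴ * G = V * Matrix.diagonal (fun j => ((efun j / τ^2 : ℝ) : ℂ)) * Vᴴ := by
    rw [hGH, hG, Matrix.smul_mul, Matrix.mul_smul, smul_smul, hmid E E, hEE]
    have hdg : Matrix.diagonal (fun j => ((efun j : ℝ) : ℂ))
        = (((τ:ℝ)^2 : ℝ):ℂ) • Matrix.diagonal (fun j => ((efun j / τ^2 : ℝ) : ℂ)) := by
      ext a b
      rw [Matrix.smul_apply]
      by_cases hab : a = b
      · subst hab
        rw [Matrix.diagonal_apply_eq, Matrix.diagonal_apply_eq, smul_eq_mul,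
          ← Complex.ofReal_mul]
        congr 1
        field_simp
      · rw [Matrix.diagonal_apply_ne _ hab, Matrix.diagonal_apply_ne _ hab, smul_zero]
    rw [hdg, Matrix.mul_smul, Matrix.smul_mul, smul_smul]
    rw [show ((τ:ℂ))⁻¹ * ((τ:ℂ))⁻¹ * (((τ:ℝ)^2 : ℝ):ℂ) = 1 by
      push_cast; field_simp]
    rw [one_smul]
  have hcontr : ((1 : Matrix (Fin n) (Fin n) ℂ) - Gᴴ * G).PosSemidef := by
    have h1 : (1 : Matrix (Fin n) (Fin n) ℂ) - Gᴴ * G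
        = V * Matrix.diagonal (fun j => ((1 - efun j / τ^2 : ℝ) : ℂ)) * Vᴴ := by
      rw [hGG]
      have hone : (1 : Matrix (Fin n) (Fin n) ℂ)
          = V * Matrix.diagonal (fun _ => (1:ℂ)) * Vᴴ := by
        rw [Matrix.diagonal_one, Matrix.mul_one, hV2]
      rw [hone, ← Matrix.sub_mul, ← Matrix.mul_sub, Matrix.diagonal_sub,
        show (fun j => (1:ℂ) - ((efun j / τ^2 : ℝ):ℂ))
          = fun j => ((1 - efun j / τ^2 : ℝ):ℂ) from funext fun j => by push_cast; ring]
    rw [h1]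
    refine Matrix.PosSemidef.mul_mul_conjTranspose_same ?_ V
    refine Matrix.posSemidef_diagonal_iff.mpr fun j => Complex.zero_le_real.mpr ?_
    have := hEbound j
    have hτ2 : (0:ℝ) < τ^2 := by positivity
    rw [sub_nonneg, div_le_one hτ2]
    exact this
  have hdual := re_trace_le_nuclearNorm G M hcontr
  -- arithmetic part
  have hfrob_rip : ∀ X : Matrix (Fin m) (Fin n) ℂ,
      frobM X ^ 2 = (Matrix.trace (Xᴴ * X)).re := by
    intro X
    rw [frobM_sq, Matrix.trace, Complex.re_sum, Finset.sum_comm]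
    exact Finset.sum_congr rfl fun j _ => (diag_re X j).symm
  have hexpand : ∀ (Pm Qm : Matrix (Fin m) (Fin n) ℂ),
      frobM (Pm + Qm)^2 = frobM Pm^2 + frobM Qm^2 + 2 * (Matrix.trace (Pmᴴ * Qm)).re := by
    intro Pm Qm
    rw [hfrob_rip, hfrob_rip, hfrob_rip]
    have hmm : (Pm+Qm)ᴴ*(Pm+Qm) = Pmᴴ*Pm + (Pmᴴ*Qm + (Qmᴴ*Pm + Qmᴴ*Qm)) := by
      rw [Matrix.conjTranspose_add, Matrix.add_mul, Matrix.mul_add, Matrix.mul_add]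
      abel
    rw [hmm, Matrix.trace_add, Matrix.trace_add, Matrix.trace_add]
    have hsym : (Matrix.trace (Qmᴴ * Pm)).re = (Matrix.trace (Pmᴴ * Qm)).re := by
      rw [show Qmᴴ * Pm = (Pmᴴ * Qm)ᴴ by
        rw [Matrix.conjTranspose_mul, Matrix.conjTranspose_conjTranspose],
        Matrix.trace_conjTranspose]
      simp
    simp only [Complex.add_re]
    rw [hsym]; ring
  have hkey : frobM (B - M)^2 = frobM (B-Y)^2 + frobM (Y-M)^2
      + 2*τ*((Matrix.trace (Gᴴ*Y)).re - (Matrix.trace (Gᴴ*M)).re) := by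
    have h1 : B - M = (B - Y) + (Y - M) := (sub_add_sub_cancel B Y M).symm
    rw [h1, hexpand]
    have h2 : (B - Y)ᴴ * (Y - M) = ((τ:ℝ):ℂ) • (Gᴴ*Y - Gᴴ*M) := by
      rw [hBYG, Matrix.conjTranspose_smul, Matrix.smul_mul, Matrix.mul_sub]
      congr 1
      exact Complex.conj_ofReal _
    rw [h2, Matrix.trace_smul, smul_eq_mul, Matrix.trace_sub]
    rw [show (((τ:ℝ):ℂ) * (Matrix.trace (Gᴴ*Y) - Matrix.trace (Gᴴ*M))).re
        = τ * ((Matrix.trace (Gᴴ*Y)).re - (Matrix.trace (Gᴴ*M)).re) by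
      simp [Complex.mul_re, Complex.sub_re]]
    ring
  have hfnn : 0 ≤ frobM (Y - M)^2 := by
    rw [frobM_sq]
    exact Finset.sum_nonneg fun i _ => Finset.sum_nonneg fun j _ => Complex.normSq_nonneg _
  have hq : (Matrix.trace (Gᴴ*Y)).re = nuclearNorm Y := by rw [hGYre, hNY]
  have hc2 : 1/(2*τ)*(2*τ*((Matrix.trace (Gᴴ*Y)).re - (Matrix.trace (Gᴴ*M)).re))
      = (Matrix.trace (Gᴴ*Y)).re - (Matrix.trace (Gᴴ*M)).re := by
    field_simp
  have hcF2 : 0 ≤ 1/(2*τ) * frobM (Y-M)^2 := by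
    have : 0 < 1/(2*τ) := by positivity
    exact mul_nonneg this.le hfnn
  rw [hkey]
  have hgoalexp : 1/(2*τ) * (frobM (B-Y)^2 + frobM (Y-M)^2
      + 2*τ*((Matrix.trace (Gᴴ*Y)).re - (Matrix.trace (Gᴴ*M)).re))
      = 1/(2*τ) * frobM (B-Y)^2 + 1/(2*τ) * frobM (Y-M)^2
        + ((Matrix.trace (Gᴴ*Y)).re - (Matrix.trace (Gᴴ*M)).re) := by
    rw [mul_add, mul_add, hc2]
  rw [hgoalexp]
  linarith [hdual, hq.symm.le, hq.le]

end MatrixLemmas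

lemma dft_sum {n p : ℕ} [NeZero n] (f : Fin p → ZMod n → ℂ) (k : ZMod n) :
    dft (∑ r, f r) k = ∑ r, dft (f r) k := by
  simp only [dft, Finset.sum_apply, Finset.sum_mul]
  rw [Finset.sum_comm]

lemma fslice_mdft_tProd {n1 n2 n4 n3 : ℕ} [NeZero n3] (A : Tensor n1 n2 n3)
    (B : Tensor n2 n4 n3) (k : ZMod n3) :
    fslice (mdft (tProd A B)) k = fslice (mdft A) k * fslice (mdft B) k := by
  ext i j
  show dft (tProd A B i j) k = _
  rw [show tProd A B i j = ∑ r, cconv (A i r) (B r j) from rfl, dft_sum]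
  rw [Matrix.mul_apply]
  exact Finset.sum_congr rfl fun r _ => dft_cconv _ _ _

lemma fslice_mdft_tconj {n1 n2 n3 : ℕ} [NeZero n3] (X : Tensor n1 n2 n3) (k : ZMod n3) :
    fslice (mdft (tconj X)) k = (fslice (mdft X) k)ᴴ := by
  ext i j
  show dft (tconj X i j) k = star (dft (X j i) k)
  rw [show tconj X i j = fun t => (starRingEnd ℂ) (X j i (-t)) from rfl, dft_conjneg]
  rfl

lemma fslice_mdft_tId {n n3 : ℕ} [NeZero n3] (k : ZMod n3) :
    fslice (mdft (tId n n3)) k = 1 := by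
  ext i j
  show dft (tId n n3 i j) k = (1 : Matrix (Fin n) (Fin n) ℂ) i j
  by_cases hij : i = j
  · subst hij
    rw [Matrix.one_apply_eq, dft_eq']
    rw [show (fun t : ZMod n3 => tId n n3 i i t * zm (k * t))
        = fun t => if t = 0 then zm (k * t) else 0 from funext fun t => by
      simp [tId]]
    rw [Finset.sum_ite_eq' Finset.univ (0 : ZMod n3) (fun t => zm (k * t))]
    simp [zm_zero]
  · rw [Matrix.one_apply_ne hij]
    rw [show tId n n3 i j = 0 from funext fun t => by simp [tId, hij]]
    exact dft_zero k

lemma fslice_mdft_sub {n1 n2 n3 : ℕ} [NeZero n3] (X Y : Tensor n1 n2 n3) (k : ZMod n3) :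
    fslice (mdft (X - Y)) k = fslice (mdft X) k - fslice (mdft Y) k := by
  ext i j
  show dft ((X - Y) i j) k = dft (X i j) k - dft (Y i j) k
  rw [show (X - Y) i j = X i j - Y i j from rfl, dft_sub]

lemma frob_sq {n1 n2 n3 : ℕ} [NeZero n3] (X : Tensor n1 n2 n3) :
    frob X ^ 2 = ∑ i : Fin n1, ∑ j : Fin n2, ∑ t : ZMod n3, Complex.normSq (X i j t) := by
  rw [frob, Real.sq_sqrt (by positivity)]
  simp_rw [Complex.sq_norm]

lemma frob_par {n1 n2 n3 : ℕ} [NeZero n3] (X : Tensor n1 n2 n3) :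
    (n3:ℝ) * frob X ^ 2 = ∑ k : ZMod n3, frobM (fslice (mdft X) k) ^ 2 := by
  rw [frob_sq]
  symm
  calc ∑ k : ZMod n3, frobM (fslice (mdft X) k) ^ 2
      = ∑ k : ZMod n3, ∑ i : Fin n1, ∑ j : Fin n2, Complex.normSq (mdft X i j k) :=
        Finset.sum_congr rfl fun k _ => frobM_sq _
    _ = ∑ i : Fin n1, ∑ k : ZMod n3, ∑ j : Fin n2, Complex.normSq (mdft X i j k) :=
        Finset.sum_comm
    _ = ∑ i : Fin n1, ∑ j : Fin n2, ∑ k : ZMod n3, Complex.normSq (mdft X i j k) :=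
        Finset.sum_congr rfl fun i _ => Finset.sum_comm
    _ = ∑ i : Fin n1, ∑ j : Fin n2, (n3:ℝ) * ∑ t : ZMod n3, Complex.normSq (X i j t) :=
        Finset.sum_congr rfl fun i _ => Finset.sum_congr rfl fun j _ => sum_normSq_dft (X i j)
    _ = (n3:ℝ) * ∑ i : Fin n1, ∑ j : Fin n2, ∑ t : ZMod n3, Complex.normSq (X i j t) := by
        rw [Finset.mul_sum]
        refine Finset.sum_congr rfl fun i _ => ?_
        rw [Finset.mul_sum]


/-- closed-form solution of the Y-subproblem: given a t-SVD
`A = U ∗ S ∗ Vᴴ` and `β > 0`, the tensor `Y* = U ∗ D ∗ Vᴴ`, where `D` is the f-diagonal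
tensor with Fourier-domain entries `D̄(i,i,k) = max (S̄(i,i,k) − n3/β) 0`, globally
minimizes `Y ↦ ‖Y‖_TNN + (β/2)‖A − Y‖_F²`. -/
theorem svt_tensor_minimizer {n1 n2 n3 : ℕ} [NeZero n3]
    (A : Tensor n1 n2 n3) (U : Tensor n1 n1 n3) (S : Tensor n1 n2 n3) (V : Tensor n2 n2 n3)
    (hU : TOrthogonal U) (hV : TOrthogonal V) (hS : FDiagonal S)
    (hSnn : ∀ (i : Fin n1) (j : Fin n2) (k : ZMod n3), (i : ℕ) = (j : ℕ) →
      0 ≤ (mdft S i j k).re ∧ (mdft S i j k).im = 0)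
    (hA : A = tProd (tProd U S) (tconj V))
    (β : ℝ) (hβ : 0 < β)
    (D : Tensor n1 n2 n3)
    (hD : ∀ (i : Fin n1) (j : Fin n2) (k : ZMod n3),
      mdft D i j k =
        if (i : ℕ) = (j : ℕ) then ((max ((mdft S i j k).re - n3 / β) 0 : ℝ) : ℂ) else 0) :
    ∀ Y : Tensor n1 n2 n3,
      tnn (tProd (tProd U D) (tconj V))
          + β / 2 * frob (A - tProd (tProd U D) (tconj V)) ^ 2
        ≤ tnn Y + β / 2 * frob (A - Y) ^ 2 := by
  intro Y
  have hn3 : 0 < (n3:ℝ) := by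
    have := Nat.pos_of_ne_zero (NeZero.ne n3)
    exact_mod_cast this
  set τ : ℝ := (n3:ℝ) / β with hτdef
  have hτ : 0 < τ := div_pos hn3 hβ
  -- slice unitarity
  have hU1 : ∀ k : ZMod n3, (fslice (mdft U) k)ᴴ * fslice (mdft U) k = 1 := by
    intro k
    have h := congrArg (fun X : Tensor n1 n1 n3 => fslice (mdft X) k) hU.2
    rwa [fslice_mdft_tProd, fslice_mdft_tconj, fslice_mdft_tId] at h
  have hV1 : ∀ k : ZMod n3, (fslice (mdft V) k)ᴴ * fslice (mdft V) k = 1 := by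
    intro k
    have h := congrArg (fun X : Tensor n2 n2 n3 => fslice (mdft X) k) hV.2
    rwa [fslice_mdft_tProd, fslice_mdft_tconj, fslice_mdft_tId] at h
  have hV2 : ∀ k : ZMod n3, fslice (mdft V) k * (fslice (mdft V) k)ᴴ = 1 := by
    intro k
    have h := congrArg (fun X : Tensor n2 n2 n3 => fslice (mdft X) k) hV.1
    rwa [fslice_mdft_tProd, fslice_mdft_tconj, fslice_mdft_tId] at h
  have hrep : ∀ (X : Tensor n1 n2 n3) (k : ZMod n3),
      fslice (mdft (tProd (tProd U X) (tconj V))) k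
        = fslice (mdft U) k * fslice (mdft X) k * (fslice (mdft V) k)ᴴ := by
    intro X k
    rw [fslice_mdft_tProd, fslice_mdft_tProd, fslice_mdft_tconj]
  set Ystar := tProd (tProd U D) (tconj V) with hYstar
  have key : ∀ k : ZMod n3,
      nuclearNorm (fslice (mdft Ystar) k)
        + 1/(2*τ) * frobM (fslice (mdft A) k - fslice (mdft Ystar) k)^2
      ≤ nuclearNorm (fslice (mdft Y) k)
        + 1/(2*τ) * frobM (fslice (mdft A) k - fslice (mdft Y) k)^2 := by
    intro k
    have hAk : fslice (mdft A) k
        = fslice (mdft U) k * fslice (mdft S) k * (fslice (mdft V) k)ᴴ := by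
      rw [hA]; exact hrep S k
    rw [hYstar, hrep D k, hAk]
    refine matrix_svt hτ (fslice (mdft U) k) (hU1 k) (fslice (mdft V) k) (hV1 k) (hV2 k)
      (fslice (mdft S) k) (fslice (mdft D) k) ?_ ?_ ?_ (fslice (mdft Y) k)
    · intro i j hij
      show dft (S i j) k = 0
      rw [show S i j = 0 from funext fun t => hS i j t hij]
      exact dft_zero k
    · intro i j hij
      exact hSnn i j k hij
    · intro i j
      exact hD i j k
  have hobj : ∀ Z : Tensor n1 n2 n3,
      tnn Z + β/2 * frob (A - Z)^2
        = ∑ k : ZMod n3, (nuclearNorm (fslice (mdft Z) k)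
            + 1/(2*τ) * frobM (fslice (mdft A) k - fslice (mdft Z) k)^2) := by
    intro Z
    rw [Finset.sum_add_distrib]
    congr 1
    have h1 : (n3:ℝ) * frob (A - Z)^2 = ∑ k, frobM (fslice (mdft (A - Z)) k)^2 := frob_par _
    have h2 : ∑ k : ZMod n3, frobM (fslice (mdft (A-Z)) k)^2
        = ∑ k : ZMod n3, frobM (fslice (mdft A) k - fslice (mdft Z) k)^2 :=
      Finset.sum_congr rfl fun k _ => by rw [fslice_mdft_sub]
    have hβn : β/2 * frob (A-Z)^2 = β/(2*(n3:ℝ)) * ((n3:ℝ) * frob (A - Z)^2) := by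
      field_simp
    rw [hβn, h1, h2, Finset.mul_sum]
    refine Finset.sum_congr rfl fun k _ => ?_
    have : β/(2*(n3:ℝ)) = 1/(2*τ) := by
      rw [hτdef]
      field_simp
    rw [this]
  rw [show tnn Ystar + β/2 * frob (A - Ystar)^2
      = ∑ k : ZMod n3, (nuclearNorm (fslice (mdft Ystar) k)
          + 1/(2*τ) * frobM (fslice (mdft A) k - fslice (mdft Ystar) k)^2) from hobj Ystar,
    show tnn Y + β/2 * frob (A - Y)^2
      = ∑ k : ZMod n3, (nuclearNorm (fslice (mdft Y) k)
          + 1/(2*τ) * frobM (fslice (mdft A) k - fslice (mdft Y) k)^2) from hobj Y]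
  exact Finset.sum_le_sum fun k _ => key k


end
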